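/- For every ℓ with 0 < ℓ < 1, the low-pass filtered increment of Riemann's non-differentiable function at frequency cutoff ℓ⁻¹/2 satisfies ‖I_{≤ℓ⁻¹/2}(ℓ)‖_{L⁴(𝕋)}⁴ ≤ ‖I(ℓ)‖_{L⁴(𝕋)}⁴ = S₄(ℓ). (This uses that the Fourier coefficients 2i·sin(πkℓ)σ_k/k of I(ℓ) have nonnegative imaginary part for all 1 ≤ k ≤ ℓ⁻¹.) -/

import Mathlib

open Real MeasureTheory

/-- `σ k = 1` if `k` is a perfect square, `0` otherwise. -/
noncomputable def sqIndicator (k : ℕ) : ℝ := if IsSquare k then 1 else 0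

/-- The character `e_k(x) = e^{2πikx}`. -/
noncomputable def eChar (k : ℕ) (x : ℝ) : ℂ :=
  Complex.exp (2 * Real.pi * Complex.I * (k : ℂ) * (x : ℂ))

/-- Riemann's non-differentiable function `R(x) = ∑_{k≥1} (σ_k/k) e^{2πikx}
    = ∑_{n≥1} e^{2πin²x}/n²`. -/
noncomputable def RiemannF (x : ℝ) : ℂ :=
  ∑' k : ℕ, ((sqIndicator k / k : ℝ) : ℂ) * eChar k x

/-- High-pass filter `R_{≥N}(x) = ∑_{k ≥ N} (σ_k/k) e^{2πikx}`. -/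
noncomputable def RiemannHigh (N : ℕ) (x : ℝ) : ℂ :=
  ∑' k : ℕ, if N ≤ k then ((sqIndicator k / k : ℝ) : ℂ) * eChar k x else 0

/-- The increment function `I(ℓ)(x) = 2i ∑_{k≥1} (sin(πkℓ)/k) σ_k e^{2πikx}`. -/
noncomputable def increment (ℓ : ℝ) (x : ℝ) : ℂ :=
  2 * Complex.I *
    ∑' k : ℕ, ((Real.sin (Real.pi * k * ℓ) / k * sqIndicator k : ℝ) : ℂ) * eChar k x

/-- The low-pass filtered increment
`I_{≤M}(ℓ)(x) = 2i ∑_{1 ≤ k ≤ M} (sin(πkℓ)/k) σ_k e^{2πikx}`. -/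
noncomputable def incrementLow (M ℓ : ℝ) (x : ℝ) : ℂ :=
  2 * Complex.I *
    ∑' k : ℕ, if 1 ≤ k ∧ (k : ℝ) ≤ M
      then ((Real.sin (Real.pi * k * ℓ) / k * sqIndicator k : ℝ) : ℂ) * eChar k x else 0

/-- The high-pass filtered increment
`I_{>M}(ℓ)(x) = 2i ∑_{k > M} (sin(πkℓ)/k) σ_k e^{2πikx}`. -/
noncomputable def incrementHigh (M ℓ : ℝ) (x : ℝ) : ℂ :=
  2 * Complex.I *
    ∑' k : ℕ, if M < (k : ℝ)
      then ((Real.sin (Real.pi * k * ℓ) / k * sqIndicator k : ℝ) : ℂ) * eChar k x else 0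

/-- The structure function `S_p(ℓ) = ∫₀¹ |R(x+ℓ) − R(x)|^p dx` (for natural `p`). -/
noncomputable def structureFn (p : ℕ) (ℓ : ℝ) : ℝ :=
  ∫ x in (0:ℝ)..1, ‖RiemannF (x + ℓ) - RiemannF x‖ ^ p

/-! ### Auxiliary lemmas -/

section Aux
open Complex ENNReal NNReal

lemma sqIndicator_nonneg (k : ℕ) : 0 ≤ sqIndicator k := by
  unfold sqIndicator; split <;> norm_num

lemma sqIndicator_le_one (k : ℕ) : sqIndicator k ≤ 1 := by
  unfold sqIndicator; split <;> norm_num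

lemma eChar_eq (k : ℕ) (x : ℝ) :
    eChar k x = Complex.exp (((2 * π * k * x : ℝ) : ℂ) * Complex.I) := by
  unfold eChar; push_cast; ring_nf

lemma eChar_abs (k : ℕ) (x : ℝ) : ‖eChar k x‖ = 1 := by
  rw [eChar_eq]; simp [Complex.norm_exp]

lemma eChar_norm (k : ℕ) (x : ℝ) : ‖eChar k x‖ = 1 := eChar_abs k x

lemma eChar_mul (j k : ℕ) (x : ℝ) : eChar j x * eChar k x = eChar (j + k) x := by
  unfold eChar; rw [← Complex.exp_add]; push_cast; ring_nf

lemma eChar_continuous (k : ℕ) : Continuous (eChar k) := by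
  unfold eChar
  exact Complex.continuous_exp.comp (continuous_const.mul Complex.continuous_ofReal)

lemma eChar_add' (k : ℕ) (y t : ℝ) :
    eChar k (y + t) = eChar k y * Complex.exp (((2 * π * k * t : ℝ) : ℂ) * Complex.I) := by
  rw [eChar_eq, eChar_eq, ← Complex.exp_add]
  congr 1
  push_cast; ring

lemma eChar_add_one (k : ℕ) (x : ℝ) : eChar k (x + 1) = eChar k x := by
  rw [eChar_add' k x 1]
  have h : Complex.exp (((2 * π * k * 1 : ℝ) : ℂ) * Complex.I) = 1 := by
    have := Complex.exp_int_mul_two_pi_mul_I (k : ℤ)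
    rw [← this]
    congr 1
    push_cast; ring
  rw [h, mul_one]

lemma two_I_sin (θ : ℝ) :
    Complex.exp ((θ : ℂ) * Complex.I) - Complex.exp (((-θ : ℝ) : ℂ) * Complex.I)
      = 2 * Complex.I * ((Real.sin θ : ℝ) : ℂ) := by
  have h : Complex.sin (θ : ℂ)
      = (Complex.exp (-θ * Complex.I) - Complex.exp (θ * Complex.I)) * Complex.I / 2 := rfl
  rw [Complex.ofReal_sin, h]
  push_cast
  linear_combination (Complex.exp ((θ:ℂ) * Complex.I)
    - Complex.exp (-(θ:ℂ) * Complex.I)) * Complex.I_sq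

lemma conj_eChar (k : ℕ) (x : ℝ) :
    (starRingEnd ℂ) (eChar k x) = Complex.exp (-(((2 * π * k * x : ℝ) : ℂ) * Complex.I)) := by
  rw [eChar_eq, ← Complex.exp_conj, map_mul, Complex.conj_I, Complex.conj_ofReal]
  ring_nf

lemma summable_sq : Summable (fun k : ℕ => sqIndicator k / k) := by
  rw [← Function.Injective.summable_iff (f := fun k : ℕ => sqIndicator k / k)
      (g := fun n : ℕ => n ^ 2) (fun a b h => Nat.pow_left_injective two_ne_zero h)]
  · have h : ((fun k : ℕ => sqIndicator k / k) ∘ fun n : ℕ => n ^ 2)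
        = fun n : ℕ => 1 / (n : ℝ) ^ 2 := by
      funext n
      have hs : IsSquare (n ^ 2) := ⟨n, pow_two n⟩
      simp only [Function.comp, sqIndicator, if_pos hs]
      push_cast; ring
    rw [h]
    exact Real.summable_one_div_nat_pow.mpr one_lt_two
  · intro x hx
    have : ¬ IsSquare x := by
      rintro ⟨r, rfl⟩
      exact hx ⟨r, by ring⟩
    simp [sqIndicator, this]

lemma eChar_orth (m n : ℕ) :
    (∫ x in (0:ℝ)..1, eChar m x * (starRingEnd ℂ) (eChar n x)) = if m = n then 1 else 0 := by
  have hpt : ∀ x : ℝ, eChar m x * (starRingEnd ℂ) (eChar n x)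
      = Complex.exp ((2 * π * Complex.I * ((m : ℂ) - n)) * x) := by
    intro x
    rw [eChar_eq, conj_eChar, ← Complex.exp_add]
    congr 1
    push_cast; ring
  simp_rw [hpt]
  by_cases h : m = n
  · subst h
    simp
  · rw [if_neg h]
    have hc : (2 * π * Complex.I * ((m : ℂ) - n)) ≠ 0 := by
      have : ((m : ℂ)) ≠ n := by exact_mod_cast fun hmn => h (Nat.cast_injective hmn)
      simp [Real.pi_ne_zero, Complex.I_ne_zero, sub_eq_zero, this]
    rw [integral_exp_mul_complex hc]
    have h1 : Complex.exp (2 * π * Complex.I * ((m : ℂ) - n) * (1:ℝ)) = 1 := by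
      have := Complex.exp_int_mul_two_pi_mul_I ((m : ℤ) - n)
      rw [← this]
      congr 1
      push_cast; ring
    have h0 : Complex.exp (2 * π * Complex.I * ((m : ℂ) - n) * (0:ℝ)) = 1 := by
      norm_num
    rw [h1, h0]
    simp

/-- Fourier coefficient of the square of `∑ c k e_k`. -/
noncomputable def coefB (c : ℕ → ℂ) (m : ℕ) : ℂ :=
  ∑ p ∈ Finset.HasAntidiagonal.antidiagonal m, c p.1 * c p.2

lemma summable_norm_coefB {c : ℕ → ℂ} (hc : Summable fun k => ‖c k‖) :
    Summable fun m => ‖coefB c m‖ :=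
  summable_norm_sum_mul_antidiagonal_of_summable_norm hc hc

lemma summable_norm_coefB_sq {c : ℕ → ℂ} (hc : Summable fun k => ‖c k‖) :
    Summable fun m => ‖coefB c m‖ ^ 2 := by
  have hB := summable_norm_coefB hc
  set C := ∑' m, ‖coefB c m‖ with hC
  refine Summable.of_nonneg_of_le (fun m => sq_nonneg _) (fun m => ?_) (hB.mul_left C)
  have hle : ‖coefB c m‖ ≤ C := Summable.le_tsum hB m (fun _ _ => norm_nonneg _)
  calc ‖coefB c m‖ ^ 2 = ‖coefB c m‖ * ‖coefB c m‖ := sq _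
    _ ≤ C * ‖coefB c m‖ := mul_le_mul_of_nonneg_right hle (norm_nonneg _)

/-- Parseval-type identity for the fourth power of an absolutely convergent
Fourier series with nonnegative frequencies. -/
lemma keyL4 (c : ℕ → ℂ) (hc : Summable fun k => ‖c k‖) :
    (∫ x in (0:ℝ)..1, ‖∑' k, c k * eChar k x‖ ^ 4) = ∑' m, ‖coefB c m‖ ^ 2 := by
  set F : ℝ → ℂ := fun x => ∑' k, c k * eChar k x with hF
  set B : ℕ → ℂ := coefB c with hBdef
  have hB : Summable fun m => ‖B m‖ := summable_norm_coefB hc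
  have hBs : Summable B := hB.of_norm
  have hB2 : Summable fun m => ‖B m‖ ^ 2 := summable_norm_coefB_sq hc
  have hcx : ∀ x : ℝ, Summable fun k => ‖c k * eChar k x‖ := by
    intro x; simpa [norm_mul, eChar_abs] using hc
  have hFsq : ∀ x : ℝ, F x ^ 2 = ∑' m, B m * eChar m x := by
    intro x
    rw [hF, sq, tsum_mul_tsum_eq_tsum_sum_antidiagonal_of_summable_norm (hcx x) (hcx x)]
    refine tsum_congr fun n => ?_
    rw [hBdef, coefB, Finset.sum_mul]
    refine Finset.sum_congr rfl fun p hp => ?_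
    have hps := Finset.HasAntidiagonal.mem_antidiagonal.mp hp
    rw [show (c p.1 * eChar p.1 x) * (c p.2 * eChar p.2 x)
        = (c p.1 * c p.2) * (eChar p.1 x * eChar p.2 x) by ring, eChar_mul, hps]
  set T : ℕ × ℕ → ℝ → ℂ := fun p x =>
    B p.1 * (starRingEnd ℂ) (B p.2) * (eChar p.1 x * (starRingEnd ℂ) (eChar p.2 x)) with hT
  have hBx : ∀ x : ℝ, Summable fun m => ‖B m * eChar m x‖ := by
    intro x; simpa [norm_mul, eChar_abs] using hB
  have hBxs : ∀ x : ℝ, Summable fun m => B m * eChar m x := fun x => (hBx x).of_norm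
  have hpt : ∀ x : ℝ, ((‖F x‖ ^ 4 : ℝ) : ℂ) = ∑' p : ℕ × ℕ, T p x := by
    intro x
    have h1 : ‖F x‖ ^ 4 = ‖F x ^ 2‖ ^ 2 := by rw [norm_pow]; ring
    have h2 : ((‖F x ^ 2‖ ^ 2 : ℝ) : ℂ) = (F x ^ 2) * (starRingEnd ℂ) (F x ^ 2) := by
      rw [Complex.mul_conj']; push_cast; ring
    have hconj : (starRingEnd ℂ) (F x ^ 2) = ∑' n, (starRingEnd ℂ) (B n * eChar n x) := by
      rw [hFsq x]
      exact ((hBxs x).hasSum.map (starRingEnd ℂ).toAddMonoidHom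
        Complex.continuous_conj).tsum_eq.symm
    have hconjsum : Summable fun n => ‖(starRingEnd ℂ) (B n * eChar n x)‖ := by
      simpa [norm_mul, eChar_abs, Complex.norm_conj] using hB
    rw [h1, h2, hconj, hFsq x, tsum_mul_tsum_of_summable_norm (hBx x) hconjsum]
    refine tsum_congr fun p => ?_
    rw [hT, map_mul]; ring
  have hmeas : ∀ p : ℕ × ℕ, AEStronglyMeasurable (T p) (volume.restrict (Set.Ioc (0:ℝ) 1)) := by
    intro p
    exact ((continuous_const.mul ((eChar_continuous p.1).mul
      (Complex.continuous_conj.comp (eChar_continuous p.2))))).aestronglyMeasurable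
  have hnorm : ∀ p : ℕ × ℕ, ∀ x : ℝ,
      (‖T p x‖₊ : ℝ≥0∞) = ((‖B p.1‖₊ * ‖B p.2‖₊ : ℝ≥0) : ℝ≥0∞) := by
    intro p x
    have h1 : ‖T p x‖ = ‖B p.1‖ * ‖B p.2‖ := by
      rw [hT]
      simp [norm_mul, eChar_abs, Complex.norm_conj]
    have h2 : ‖T p x‖₊ = ‖B p.1‖₊ * ‖B p.2‖₊ := by
      ext; push_cast [coe_nnnorm]; exact h1
    rw [h2]
  have hBnn : Summable fun m => ‖B m‖₊ := by
    rw [← NNReal.summable_coe]; simpa [coe_nnnorm] using hB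
  have hlint : (∑' p : ℕ × ℕ, ∫⁻ x in Set.Ioc (0:ℝ) 1, ‖T p x‖₊) ≠ ⊤ := by
    have heach : ∀ p : ℕ × ℕ, (∫⁻ x in Set.Ioc (0:ℝ) 1, ‖T p x‖₊)
        = ((‖B p.1‖₊ * ‖B p.2‖₊ : ℝ≥0) : ℝ≥0∞) := by
      intro p
      rw [show (fun x => (‖T p x‖₊ : ℝ≥0∞)) = fun _ => ((‖B p.1‖₊ * ‖B p.2‖₊ : ℝ≥0) : ℝ≥0∞) from
        funext (hnorm p), MeasureTheory.setLIntegral_const]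
      simp [Real.volume_Ioc]
    simp_rw [heach]
    rw [ENNReal.tsum_prod']
    have hsplit : ∀ a : ℕ, (∑' b : ℕ, ((‖B a‖₊ * ‖B b‖₊ : ℝ≥0) : ℝ≥0∞))
        = (‖B a‖₊ : ℝ≥0∞) * ∑' b, (‖B b‖₊ : ℝ≥0∞) := by
      intro a
      rw [← ENNReal.tsum_mul_left]
      simp [ENNReal.coe_mul]
    simp_rw [hsplit]
    rw [ENNReal.tsum_mul_right]
    have hfin : (∑' b : ℕ, (‖B b‖₊ : ℝ≥0∞)) ≠ ⊤ := ENNReal.tsum_coe_ne_top_iff_summable.mpr hBnn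
    exact ENNReal.mul_ne_top hfin hfin
  have hinj : Function.Injective (fun m : ℕ => (m, m)) := fun a b h => (Prod.ext_iff.mp h).1
  have hkey : ((∫ x in (0:ℝ)..1, ‖F x‖ ^ 4 : ℝ) : ℂ) = ((∑' m, ‖B m‖ ^ 2 : ℝ) : ℂ) := by
    rw [← intervalIntegral.integral_ofReal]
    calc (∫ x in (0:ℝ)..1, ((‖F x‖ ^ 4 : ℝ) : ℂ))
        = ∫ x in (0:ℝ)..1, ∑' p : ℕ × ℕ, T p x :=
          intervalIntegral.integral_congr fun x _ => hpt x
      _ = ∫ x in Set.Ioc (0:ℝ) 1, ∑' p : ℕ × ℕ, T p x := intervalIntegral.integral_of_le zero_le_one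
      _ = ∑' p : ℕ × ℕ, ∫ x in Set.Ioc (0:ℝ) 1, T p x := MeasureTheory.integral_tsum hmeas hlint
      _ = ∑' p : ℕ × ℕ, (if p.1 = p.2 then B p.1 * (starRingEnd ℂ) (B p.2) else 0) := by
          refine tsum_congr fun p => ?_
          rw [hT]
          simp only
          rw [integral_const_mul, ← intervalIntegral.integral_of_le zero_le_one,
            eChar_orth p.1 p.2]
          split <;> simp
      _ = ∑' m : ℕ, ((‖B m‖ ^ 2 : ℝ) : ℂ) := by
          rw [← Function.Injective.tsum_eq hinj (f := fun p : ℕ × ℕ =>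
            (if p.1 = p.2 then B p.1 * (starRingEnd ℂ) (B p.2) else 0)) ?_]
          · refine tsum_congr fun m => ?_
            simp only [if_pos rfl, Complex.mul_conj']
            push_cast; ring
          · intro p hp
            rcases p with ⟨m, n⟩
            by_cases h : m = n
            · exact ⟨m, by simp [h]⟩
            · simp [h] at hp
      _ = ((∑' m, ‖B m‖ ^ 2 : ℝ) : ℂ) :=
          (ContinuousLinearMap.map_tsum Complex.ofRealCLM hB2).symm
  exact_mod_cast hkey

lemma coefB_two_I (r : ℕ → ℝ) (m : ℕ) :
    coefB (fun k => 2 * Complex.I * ((r k : ℝ) : ℂ)) m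
      = (-4 : ℂ) * ((∑ p ∈ Finset.HasAntidiagonal.antidiagonal m, r p.1 * r p.2 : ℝ) : ℂ) := by
  unfold coefB
  have h : ∀ p : ℕ × ℕ, (2 * Complex.I * ((r p.1 : ℝ) : ℂ)) * (2 * Complex.I * ((r p.2 : ℝ) : ℂ))
      = (-4 : ℂ) * ((r p.1 * r p.2 : ℝ) : ℂ) := by
    intro p
    rw [show (2 * Complex.I * ((r p.1 : ℝ) : ℂ)) * (2 * Complex.I * ((r p.2 : ℝ) : ℂ))
        = (4:ℂ) * Complex.I ^ 2 * (((r p.1 : ℝ) : ℂ) * ((r p.2 : ℝ) : ℂ)) by ring, Complex.I_sq]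
    push_cast; ring
  rw [Finset.sum_congr rfl fun p _ => h p, ← Finset.mul_sum]
  push_cast
  ring

lemma norm_coefB_two_I (r : ℕ → ℝ) (m : ℕ) :
    ‖coefB (fun k => 2 * Complex.I * ((r k : ℝ) : ℂ)) m‖
      = 4 * |∑ p ∈ Finset.HasAntidiagonal.antidiagonal m, r p.1 * r p.2| := by
  rw [coefB_two_I, norm_mul, Complex.norm_real, Real.norm_eq_abs]
  norm_num

end Aux

/-- For every `0 < ℓ < 1`,
`‖I_{≤ℓ⁻¹/2}(ℓ)‖_{L⁴(𝕋)}⁴ ≤ ‖I(ℓ)‖_{L⁴(𝕋)}⁴ = S₄(ℓ)`. -/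
theorem riemann_increment_low_le_S4 :
    ∀ ℓ : ℝ, 0 < ℓ → ℓ < 1 →
      (∫ x in (0:ℝ)..1, ‖incrementLow (ℓ⁻¹ / 2) ℓ x‖ ^ 4) ≤
        (∫ x in (0:ℝ)..1, ‖increment ℓ x‖ ^ 4) ∧
      (∫ x in (0:ℝ)..1, ‖increment ℓ x‖ ^ 4) = structureFn 4 ℓ := by
  intro ℓ hℓ0 hℓ1
  set M : ℝ := ℓ⁻¹ / 2 with hM
  set a : ℕ → ℝ := fun k => Real.sin (π * k * ℓ) / k * sqIndicator k with ha
  set a' : ℕ → ℝ := fun k => if 1 ≤ k ∧ (k : ℝ) ≤ M then a k else 0 with ha'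
  set c : ℕ → ℂ := fun k => 2 * Complex.I * ((a k : ℝ) : ℂ) with hc
  set c' : ℕ → ℂ := fun k => 2 * Complex.I * ((a' k : ℝ) : ℂ) with hc'
  -- summability
  have habs : ∀ k : ℕ, |a k| ≤ sqIndicator k / k := by
    intro k
    rw [ha]
    simp only
    rw [abs_mul, abs_div, abs_of_nonneg (sqIndicator_nonneg k), abs_of_nonneg (show (0:ℝ) ≤ (k:ℝ) from Nat.cast_nonneg k)]
    calc |Real.sin (π * k * ℓ)| / k * sqIndicator k
        ≤ 1 / k * sqIndicator k := by
          gcongr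
          · exact sqIndicator_nonneg k
          · exact Real.abs_sin_le_one _
      _ = sqIndicator k / k := by ring
  have hsa : Summable fun k => |a k| :=
    Summable.of_nonneg_of_le (fun k => abs_nonneg _) habs summable_sq
  have hcn : Summable fun k => ‖c k‖ := by
    have : (fun k => ‖c k‖) = fun k => 2 * |a k| := by
      funext k
      rw [hc]
      simp [norm_mul, Complex.norm_real]
    rw [this]
    exact hsa.mul_left 2
  have ha'le : ∀ k, |a' k| ≤ |a k| := by
    intro k
    rw [ha']
    simp only
    split
    · exact le_refl _
    · simpa using abs_nonneg (a k)
  have hc'n : Summable fun k => ‖c' k‖ := by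
    have : (fun k => ‖c' k‖) = fun k => 2 * |a' k| := by
      funext k
      rw [hc']
      simp [norm_mul, Complex.norm_real]
    rw [this]
    exact Summable.of_nonneg_of_le (fun k => by positivity)
      (fun k => by have := ha'le k; nlinarith [abs_nonneg (a k)]) (hsa.mul_left 2)
  -- rewriting the increments
  have hIncr : ∀ x : ℝ, increment ℓ x = ∑' k, c k * eChar k x := by
    intro x
    rw [increment, ← tsum_mul_left]
    exact tsum_congr fun k => by rw [hc]; ring
  have hLow : ∀ x : ℝ, incrementLow M ℓ x = ∑' k, c' k * eChar k x := by
    intro x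
    rw [incrementLow, ← tsum_mul_left]
    refine tsum_congr fun k => ?_
    by_cases h : 1 ≤ k ∧ (k : ℝ) ≤ M
    · simp only [hc', ha', ha, if_pos h]; ring
    · simp only [hc', ha', ha, if_neg h]; simp
  have h1 : (∫ x in (0:ℝ)..1, ‖incrementLow M ℓ x‖ ^ 4) = ∑' m, ‖coefB c' m‖ ^ 2 := by
    rw [intervalIntegral.integral_congr (fun x _ => by rw [hLow x])]
    exact keyL4 c' hc'n
  have h2 : (∫ x in (0:ℝ)..1, ‖increment ℓ x‖ ^ 4) = ∑' m, ‖coefB c m‖ ^ 2 := by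
    rw [intervalIntegral.integral_congr (fun x _ => by rw [hIncr x])]
    exact keyL4 c hcn
  constructor
  · -- inequality part
    rw [h1, h2]
    refine Summable.tsum_le_tsum (fun m => ?_) (summable_norm_coefB_sq hc'n) (summable_norm_coefB_sq hcn)
    have hnorm_le : ‖coefB c' m‖ ≤ ‖coefB c m‖ := by
      rw [hc, hc', norm_coefB_two_I, norm_coefB_two_I]
      gcongr 4 * ?_
      set S : ℝ := ∑ p ∈ Finset.HasAntidiagonal.antidiagonal m, a p.1 * a p.2 with hS
      set S' : ℝ := ∑ p ∈ Finset.HasAntidiagonal.antidiagonal m, a' p.1 * a' p.2 with hS'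
      by_cases hm : (m : ℝ) * ℓ ≤ 1
      · -- all coefficients with index ≤ m are nonnegative
        have hak : ∀ j : ℕ, j ≤ m → 0 ≤ a j := by
          intro j hj
          rw [ha]
          simp only
          apply mul_nonneg _ (sqIndicator_nonneg j)
          apply div_nonneg _ (Nat.cast_nonneg j)
          apply Real.sin_nonneg_of_nonneg_of_le_pi
          · positivity
          · have hjm : (j : ℝ) ≤ (m : ℝ) := Nat.cast_le.mpr hj
            have hj' : (j : ℝ) * ℓ ≤ 1 := by nlinarith
            calc π * j * ℓ = π * ((j : ℝ) * ℓ) := by ring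
              _ ≤ π * 1 := mul_le_mul_of_nonneg_left hj' Real.pi_nonneg
              _ = π := mul_one π
        have ha'k : ∀ j : ℕ, j ≤ m → 0 ≤ a' j ∧ a' j ≤ a j := by
          intro j hj
          rw [ha']
          simp only
          split
          · exact ⟨hak j hj, le_refl _⟩
          · exact ⟨le_refl 0, hak j hj⟩
        have hS'0 : 0 ≤ S' := by
          rw [hS']
          refine Finset.sum_nonneg fun p hp => ?_
          have hps := Finset.HasAntidiagonal.mem_antidiagonal.mp hp
          exact mul_nonneg (ha'k p.1 (by omega)).1 (ha'k p.2 (by omega)).1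
        have hSS : S' ≤ S := by
          rw [hS, hS']
          refine Finset.sum_le_sum fun p hp => ?_
          have hps := Finset.HasAntidiagonal.mem_antidiagonal.mp hp
          have h1 := ha'k p.1 (by omega)
          have h2 := ha'k p.2 (by omega)
          exact mul_le_mul h1.2 h2.2 h2.1 (hak p.1 (by omega))
        rw [abs_of_nonneg hS'0, abs_of_nonneg (le_trans hS'0 hSS)]
        exact hSS
      · -- high frequencies: S' = 0
        have hS'0 : S' = 0 := by
          rw [hS']
          refine Finset.sum_eq_zero fun p hp => ?_
          have hps := Finset.HasAntidiagonal.mem_antidiagonal.mp hp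
          have hsum : (p.1 : ℝ) + (p.2 : ℝ) = (m : ℝ) := by exact_mod_cast congrArg Nat.cast hps
          have hlarge : M < (p.1 : ℝ) ∨ M < (p.2 : ℝ) := by
            by_contra hcon
            push_neg at hcon
            apply hm
            have : (m : ℝ) ≤ ℓ⁻¹ := by
              rw [← hsum]
              have h1 := hcon.1; have h2 := hcon.2
              have hMeq : M = ℓ⁻¹ / 2 := hM
              linarith
            calc (m : ℝ) * ℓ ≤ ℓ⁻¹ * ℓ := by gcongr
              _ = 1 := inv_mul_cancel₀ (ne_of_gt hℓ0)
          rcases hlarge with h | h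
          · have : a' p.1 = 0 := by
              rw [ha']; simp only
              rw [if_neg]
              push_neg
              intro _
              linarith
            rw [this, zero_mul]
          · have : a' p.2 = 0 := by
              rw [ha']; simp only
              rw [if_neg]
              push_neg
              intro _
              linarith
            rw [this, mul_zero]
        rw [hS'0]
        simp [abs_nonneg]
    nlinarith [norm_nonneg (coefB c' m), norm_nonneg (coefB c m)]
  · -- equality with the structure function
    have hsumR : ∀ y : ℝ, Summable fun k : ℕ => ((sqIndicator k / k : ℝ) : ℂ) * eChar k y := by
      intro y
      apply Summable.of_norm
      have : (fun k : ℕ => ‖((sqIndicator k / k : ℝ) : ℂ) * eChar k y‖)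
          = fun k : ℕ => sqIndicator k / k := by
        funext k
        rw [norm_mul, eChar_norm, mul_one, Complex.norm_real, Real.norm_eq_abs,
          abs_of_nonneg (div_nonneg (sqIndicator_nonneg k) (Nat.cast_nonneg k))]
      rw [this]
      exact summable_sq
    have hpt : ∀ x : ℝ, RiemannF (x + ℓ) - RiemannF x = increment ℓ (x + ℓ / 2) := by
      intro x
      rw [RiemannF, RiemannF, ← Summable.tsum_sub (hsumR (x + ℓ)) (hsumR x), increment, ← tsum_mul_left]
      refine tsum_congr fun k => ?_
      have hsplit1 : eChar k (x + ℓ) = eChar k (x + ℓ / 2)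
          * Complex.exp (((π * k * ℓ : ℝ) : ℂ) * Complex.I) := by
        have harg : (2 * π * k * (ℓ / 2) : ℝ) = π * k * ℓ := by ring
        rw [show x + ℓ = (x + ℓ / 2) + ℓ / 2 by ring, eChar_add', harg]
      have hsplit2 : eChar k x = eChar k (x + ℓ / 2)
          * Complex.exp (((-(π * k * ℓ) : ℝ) : ℂ) * Complex.I) := by
        have harg : (2 * π * k * (ℓ / 2) : ℝ) = π * k * ℓ := by ring
        rw [eChar_add' k x (ℓ / 2), harg, mul_assoc, ← Complex.exp_add,
          show (((π * k * ℓ : ℝ)) : ℂ) * Complex.I + ((-(π * k * ℓ) : ℝ) : ℂ) * Complex.I = 0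
            by push_cast; ring, Complex.exp_zero, mul_one]
      rw [show ((sqIndicator k / k : ℝ) : ℂ) * eChar k (x + ℓ)
            - ((sqIndicator k / k : ℝ) : ℂ) * eChar k x
          = ((sqIndicator k / k : ℝ) : ℂ) * (eChar k (x + ℓ) - eChar k x) by ring,
        hsplit1, hsplit2,
        show eChar k (x + ℓ / 2) * Complex.exp (((π * k * ℓ : ℝ) : ℂ) * Complex.I)
            - eChar k (x + ℓ / 2) * Complex.exp (((-(π * k * ℓ) : ℝ) : ℂ) * Complex.I)
          = eChar k (x + ℓ / 2) * (Complex.exp (((π * k * ℓ : ℝ) : ℂ) * Complex.I)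
            - Complex.exp (((-(π * k * ℓ) : ℝ) : ℂ) * Complex.I)) by ring,
        two_I_sin (π * k * ℓ)]
      push_cast
      ring
    have hper : Function.Periodic (fun x => ‖increment ℓ x‖ ^ 4) 1 := by
      intro x
      simp only
      congr 2
      rw [increment, increment]
      congr 1
      exact tsum_congr fun k => by rw [eChar_add_one]
    symm
    calc structureFn 4 ℓ
        = ∫ x in (0:ℝ)..1, ‖increment ℓ (x + ℓ / 2)‖ ^ 4 := by
          rw [structureFn]
          exact intervalIntegral.integral_congr fun x _ => by rw [hpt x]
      _ = ∫ x in ((0:ℝ) + ℓ / 2)..((1:ℝ) + ℓ / 2), ‖increment ℓ x‖ ^ 4 :=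
          intervalIntegral.integral_comp_add_right (fun y => ‖increment ℓ y‖ ^ 4) (ℓ / 2)
      _ = ∫ x in (ℓ / 2)..(ℓ / 2 + 1), ‖increment ℓ x‖ ^ 4 := by
          rw [zero_add, add_comm 1 (ℓ / 2)]
      _ = ∫ x in (0:ℝ)..(0 + 1), ‖increment ℓ x‖ ^ 4 := hper.intervalIntegral_add_eq (ℓ / 2) 0
      _ = ∫ x in (0:ℝ)..1, ‖increment ℓ x‖ ^ 4 := by norm_num
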